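/- Let g: ℝ → ℝ be C², bounded, with bounded first and second derivatives, and suppose there exist f_* ∈ (0, 1/2) and m > 0 such that η''(y) < -m for all y ∈ [-f_*, f_*], where η(y) = g(y) + g(-y), and η is decreasing in |y|. Define G(r) = E[g(Z - rs/2)] where Z ~ N(0, s²/4). Then there exists s_* > 0 such that for all s ∈ (0, s_*) and all r > 0, (1/2)(G(r) + G(-r)) < G(0). -/

import Mathlib

open Real MeasureTheory Set Filter

lemma my_integral_comp_neg (f : ℝ → ℝ) : ∫ x : ℝ, f (-x) = ∫ x : ℝ, f x := by
  have h := MeasureTheory.Measure.map_neg_eq_self (volume : Measure ℝ)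
  let e : ℝ ≃ᵐ ℝ := (Homeomorph.neg ℝ).toMeasurableEquiv
  conv_rhs => rw [← h]
  rw [show Measure.map Neg.neg (volume : Measure ℝ) = Measure.map e volume from rfl,
    MeasureTheory.integral_map_equiv e f]
  rfl

lemma my_sec_bound (φ φ' φ'' : ℝ → ℝ) {K a : ℝ} (ha : 0 ≤ a)
    (h1 : ∀ t, HasDerivAt φ (φ' t) t) (h2 : ∀ t, HasDerivAt φ' (φ'' t) t)
    (h0 : φ' 0 = 0) (hK : ∀ t ∈ Icc 0 a, φ'' t ≤ K) :
    φ a ≤ φ 0 + K * a ^ 2 / 2 := by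
  set χ : ℝ → ℝ := fun t => K * t - φ' t with hχ
  have hχd : ∀ t, HasDerivAt χ (K - φ'' t) t := by
    intro t
    have := ((hasDerivAt_id t).const_mul K).sub (h2 t)
    simpa [Pi.sub_def] using this
  have hχmono : MonotoneOn χ (Icc 0 a) := by
    apply monotoneOn_of_deriv_nonneg (convex_Icc 0 a)
    · exact fun t _ => (hχd t).continuousAt.continuousWithinAt
    · exact fun t _ => ((hχd t).differentiableAt).differentiableWithinAt
    · intro t ht
      rw [(hχd t).deriv]
      rw [interior_Icc] at ht
      have := hK t ⟨le_of_lt ht.1, le_of_lt ht.2⟩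
      linarith
  have hχ0 : χ 0 = 0 := by simp [hχ, h0]
  have hχnn : ∀ t ∈ Icc 0 a, 0 ≤ χ t := by
    intro t ht
    have := hχmono ⟨le_refl 0, ha⟩ ht ht.1
    rwa [hχ0] at this
  set ψ : ℝ → ℝ := fun t => φ 0 + K * t ^ 2 / 2 - φ t with hψ
  have hψd : ∀ t, HasDerivAt ψ (χ t) t := by
    intro t
    have h3 : HasDerivAt (fun t : ℝ => φ 0 + K * t ^ 2 / 2) (K * t) t := by
      have := (((hasDerivAt_pow 2 t).const_mul K).div_const 2).const_add (φ 0)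
      refine this.congr_deriv ?_
      ring
    have := h3.sub (h1 t)
    exact this
  have hψmono : MonotoneOn ψ (Icc 0 a) := by
    apply monotoneOn_of_deriv_nonneg (convex_Icc 0 a)
    · exact fun t _ => (hψd t).continuousAt.continuousWithinAt
    · exact fun t _ => ((hψd t).differentiableAt).differentiableWithinAt
    · intro t ht
      rw [(hψd t).deriv]
      rw [interior_Icc] at ht
      exact hχnn t ⟨le_of_lt ht.1, le_of_lt ht.2⟩
  have := hψmono ⟨le_refl 0, ha⟩ ⟨ha, le_refl a⟩ ha
  simp only [hψ] at this
  nlinarith [this]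

lemma my_integrable_sq_exp {b : ℝ} (hb : 0 < b) :
    Integrable (fun x : ℝ => x ^ 2 * Real.exp (-b * x ^ 2)) := by
  have := integrable_rpow_mul_exp_neg_mul_sq hb (s := 2) (by norm_num)
  refine this.congr ?_
  refine Filter.Eventually.of_forall fun x => ?_
  simp only []
  rw [show ((2 : ℝ)) = ((2 : ℕ) : ℝ) by norm_num, Real.rpow_natCast]

lemma my_integral_sq_exp {b : ℝ} (hb : 0 < b) :
    ∫ x : ℝ, x ^ 2 * Real.exp (-b * x ^ 2) = Real.sqrt (π / b) / (2 * b) := by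
  have heven : ∫ x : ℝ, x ^ 2 * Real.exp (-b * x ^ 2)
      = 2 * ∫ x in Ioi (0:ℝ), x ^ 2 * Real.exp (-b * x ^ 2) := by
    rw [← integral_comp_abs (f := fun x : ℝ => x ^ 2 * Real.exp (-b * x ^ 2))]
    congr 1
    funext x
    rw [sq_abs]
  set F : ℝ → ℝ := fun x => -x * Real.exp (-b * x ^ 2) / (2 * b) with hF
  have hFd : ∀ x : ℝ, HasDerivAt F
      (x ^ 2 * Real.exp (-b * x ^ 2) - Real.exp (-b * x ^ 2) / (2 * b)) x := by
    intro x
    have h1 : HasDerivAt (fun x : ℝ => -b * x ^ 2) (-b * (2 * x)) x := by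
      simpa using ((hasDerivAt_pow 2 x).const_mul (-b))
    have h2 : HasDerivAt (fun x : ℝ => Real.exp (-b * x ^ 2))
        (Real.exp (-b * x ^ 2) * (-b * (2 * x))) x := (Real.hasDerivAt_exp _).comp x h1
    have h3 : HasDerivAt (fun x : ℝ => -x * Real.exp (-b * x ^ 2))
        (-1 * Real.exp (-b * x ^ 2) + -x * (Real.exp (-b * x ^ 2) * (-b * (2 * x)))) x := by
      simpa [Pi.mul_def, Pi.neg_def] using ((hasDerivAt_id x).neg.mul h2)
    have h4 := h3.div_const (2 * b)
    refine h4.congr_deriv ?_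
    field_simp
    ring
  have htend : Tendsto F atTop (nhds 0) := by
    have hlo := rpow_mul_exp_neg_mul_sq_isLittleO_exp_neg hb 1
    have h0 : Tendsto (fun x : ℝ => Real.exp (-(1/2) * x)) atTop (nhds 0) := by
      have : Tendsto (fun x : ℝ => -(1/2) * x) atTop atBot :=
        Tendsto.const_mul_atTop_of_neg (by norm_num) tendsto_id
      exact Real.tendsto_exp_atBot.comp this
    have h1 : Tendsto (fun x : ℝ => x ^ (1:ℝ) * Real.exp (-b * x ^ 2)) atTop (nhds 0) :=
      hlo.isBigO.trans_tendsto h0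
    have h2 : Tendsto (fun x : ℝ => x * Real.exp (-b * x ^ 2)) atTop (nhds 0) := by
      refine h1.congr' ?_
      filter_upwards [eventually_ge_atTop (0:ℝ)] with x hx
      rw [Real.rpow_one]
    have := (h2.neg).div_const (2 * b)
    simpa [hF, neg_mul] using this
  have hint : IntegrableOn (fun x : ℝ =>
      x ^ 2 * Real.exp (-b * x ^ 2) - Real.exp (-b * x ^ 2) / (2 * b)) (Ioi 0) := by
    refine (Integrable.sub (my_integrable_sq_exp hb) ?_).integrableOn
    exact (integrable_exp_neg_mul_sq hb).div_const (2 * b)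
  have hftc := integral_Ioi_of_hasDerivAt_of_tendsto' (a := 0)
      (fun x _ => hFd x) hint htend
  have hF0 : F 0 = 0 := by simp [hF]
  rw [hF0, sub_zero] at hftc
  have hsub : ∫ x in Ioi (0:ℝ), (x ^ 2 * Real.exp (-b * x ^ 2) - Real.exp (-b * x ^ 2) / (2 * b))
      = (∫ x in Ioi (0:ℝ), x ^ 2 * Real.exp (-b * x ^ 2))
        - ∫ x in Ioi (0:ℝ), Real.exp (-b * x ^ 2) / (2 * b) := by
    exact integral_sub ((my_integrable_sq_exp hb).integrableOn)
      (((integrable_exp_neg_mul_sq hb).div_const (2*b)).integrableOn)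
  rw [hsub] at hftc
  have hgauss : ∫ x in Ioi (0:ℝ), Real.exp (-b * x ^ 2) / (2 * b)
      = (Real.sqrt (π / b) / 2) / (2 * b) := by
    rw [integral_div, integral_gaussian_Ioi]
  rw [hgauss] at hftc
  rw [heven]
  have : (∫ x in Ioi (0:ℝ), x ^ 2 * Real.exp (-b * x ^ 2))
      = Real.sqrt (π / b) / 2 / (2 * b) := by linarith
  rw [this]
  ring

section W
variable {b C : ℝ}

lemma myW_sqrt_pos (hb : 0 < b) : 0 < Real.sqrt (π / b) :=
  Real.sqrt_pos.mpr (div_pos Real.pi_pos hb)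

lemma myW_int (hb : 0 < b) : Integrable (fun z : ℝ => Real.exp (-b * z ^ 2) * C) :=
  (integrable_exp_neg_mul_sq hb).mul_const C

lemma myW_sq_int (hb : 0 < b) : Integrable (fun z : ℝ => z ^ 2 * (Real.exp (-b * z ^ 2) * C)) := by
  have := (my_integrable_sq_exp hb).mul_const C
  refine this.congr (Filter.Eventually.of_forall fun x => by ring)

lemma myW_tot (hb : 0 < b) (hC : C = (Real.sqrt (π / b))⁻¹) :
    ∫ z : ℝ, Real.exp (-b * z ^ 2) * C = 1 := by
  rw [MeasureTheory.integral_mul_const, integral_gaussian, hC]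
  exact mul_inv_cancel₀ (ne_of_gt (myW_sqrt_pos hb))

lemma myW_sq (hb : 0 < b) (hC : C = (Real.sqrt (π / b))⁻¹) :
    ∫ z : ℝ, z ^ 2 * (Real.exp (-b * z ^ 2) * C) = 1 / (2 * b) := by
  have h1 : (fun z : ℝ => z ^ 2 * (Real.exp (-b * z ^ 2) * C))
      = fun z : ℝ => (z ^ 2 * Real.exp (-b * z ^ 2)) * C := funext fun z => by ring
  rw [h1, MeasureTheory.integral_mul_const, my_integral_sq_exp hb, hC]
  have h3 := myW_sqrt_pos (b := b) hb
  field_simp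

lemma myW_half_Ioi (hb : 0 < b) (hC : C = (Real.sqrt (π / b))⁻¹) :
    ∫ z in Ioi (0:ℝ), Real.exp (-b * z ^ 2) * C = 1 / 2 := by
  rw [MeasureTheory.integral_mul_const, integral_gaussian_Ioi, hC]
  have h3 := myW_sqrt_pos (b := b) hb
  field_simp

lemma myW_half_Iic (hb : 0 < b) (hC : C = (Real.sqrt (π / b))⁻¹) :
    ∫ z in Iic (0:ℝ), Real.exp (-b * z ^ 2) * C = 1 / 2 := by
  have hadd := intervalIntegral.integral_Iic_add_Ioi (b := (0:ℝ))
    ((myW_int hb (C := C)).integrableOn) ((myW_int hb (C := C)).integrableOn)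
  rw [myW_tot hb hC, myW_half_Ioi hb hC] at hadd
  linarith

end W

set_option maxHeartbeats 2000000 in
theorem G_concavity (g : ℝ → ℝ)
    (hsmooth : ContDiff ℝ 2 g)
    (hbdd : ∃ M, ∀ y, |g y| ≤ M)
    (hbdd1 : ∃ M, ∀ y, |deriv g y| ≤ M)
    (hbdd2 : ∃ M, ∀ y, |iteratedDeriv 2 g y| ≤ M)
    (fstar m : ℝ) (hf1 : 0 < fstar) (hf2 : fstar < 1 / 2) (hm : 0 < m)
    (hconc : ∀ y ∈ Set.Icc (-fstar) fstar,
      iteratedDeriv 2 (fun x => g x + g (-x)) y < -m)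
    (hdec : ∀ a b : ℝ, |a| ≤ |b| → g b + g (-b) ≤ g a + g (-a))
    (G : ℝ → ℝ → ℝ)
    (hG : ∀ s r : ℝ, G s r =
      ∫ z : ℝ, g (z - r * s / 2) *
        (Real.exp (-(z ^ 2) / (2 * (s ^ 2 / 4))) / Real.sqrt (2 * Real.pi * (s ^ 2 / 4)))) :
    ∃ sstar : ℝ, 0 < sstar ∧ ∀ s : ℝ, 0 < s → s < sstar → ∀ r : ℝ, 0 < r →
      (1 / 2) * (G s r + G s (-r)) < G s 0 := by
  obtain ⟨M, hM⟩ := hbdd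
  obtain ⟨M2, hM2⟩ := hbdd2
  have hM2nn : 0 ≤ M2 := le_trans (abs_nonneg _) (hM2 0)
  set η : ℝ → ℝ := fun x => g x + g (-x) with hηdef
  -- differentiability bookkeeping
  have hgd : Differentiable ℝ g := hsmooth.differentiable (by norm_num)
  have hgd1 : Differentiable ℝ (deriv g) := by
    have h := (contDiff_succ_iff_deriv (n := 1)).mp (by exact_mod_cast hsmooth)
    exact h.2.2.differentiable (by norm_num)
  set d1 : ℝ → ℝ := fun y => deriv g y - deriv g (-y) with hd1def
  set d2 : ℝ → ℝ := fun y => deriv (deriv g) y + deriv (deriv g) (-y) with hd2def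
  have hiter2 : ∀ y, iteratedDeriv 2 g y = deriv (deriv g) y := by
    intro y
    rw [iteratedDeriv_succ, iteratedDeriv_one]
  have hnegD : ∀ (f : ℝ → ℝ), Differentiable ℝ f → ∀ y : ℝ,
      HasDerivAt (fun x => f (-x)) (-(deriv f (-y))) y := by
    intro f hf y
    have := ((hf (-y)).hasDerivAt).comp y (hasDerivAt_neg y)
    simpa [mul_comm, Function.comp_def] using this
  have hd1 : ∀ y, HasDerivAt η (d1 y) y := by
    intro y
    have := ((hgd y).hasDerivAt).add (hnegD g hgd y)
    simpa [hηdef, hd1def, sub_eq_add_neg, Pi.add_def] using this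
  have hd2 : ∀ y, HasDerivAt d1 (d2 y) y := by
    intro y
    have := ((hgd1 y).hasDerivAt).sub (hnegD (deriv g) hgd1 y)
    simpa [hd1def, hd2def, sub_neg_eq_add, Pi.sub_def] using this
  have hdη : deriv η = d1 := funext fun y => (hd1 y).deriv
  have hη2eq : ∀ y, iteratedDeriv 2 η y = d2 y := by
    intro y
    rw [iteratedDeriv_succ, iteratedDeriv_one, hdη]
    exact (hd2 y).deriv
  have hη2lt : ∀ y ∈ Icc (-fstar) fstar, d2 y < -m := by
    intro y hy
    have h := hconc y hy
    rwa [hη2eq y] at h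
  have hη2bdd : ∀ y, |d2 y| ≤ 2 * M2 := by
    intro y
    have h1 := hM2 y
    have h2 := hM2 (-y)
    rw [hiter2] at h1
    rw [hiter2] at h2
    calc |d2 y| ≤ |deriv (deriv g) y| + |deriv (deriv g) (-y)| := abs_add_le _ _
      _ ≤ 2 * M2 := by linarith
  have hη10 : d1 0 = 0 := by simp [hd1def]
  have hηeven : ∀ y, η (-y) = η y := by
    intro y
    simp only [hηdef, neg_neg]
    ring
  have hηbdd : ∀ y, |η y| ≤ 2 * M := by
    intro y
    simp only [hηdef]
    calc |g y + g (-y)| ≤ |g y| + |g (-y)| := abs_add_le _ _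
      _ ≤ 2 * M := by linarith [hM y, hM (-y)]
  clear_value η d1 d2
  -- pointwise concavity estimates
  have hsb : ∀ u : ℝ, 0 ≤ u → u ≤ fstar → η u ≤ η 0 - m * u ^ 2 / 2 := by
    intro u hu0 huf
    have key := my_sec_bound η d1 d2 hu0 hd1 hd2 hη10 (K := -m) (fun t' ht' =>
      (hη2lt t' ⟨by linarith [ht'.1], by linarith [ht'.2]⟩).le)
    linarith [key]
  have hA : ∀ t : ℝ, η t ≤ η 0 - m / 2 * min (t ^ 2) (fstar ^ 2) := by
    have hA0 : ∀ t : ℝ, 0 ≤ t → η t ≤ η 0 - m / 2 * min (t ^ 2) (fstar ^ 2) := by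
      intro t ht
      by_cases hto : t ≤ fstar
      · have hmin : min (t ^ 2) (fstar ^ 2) = t ^ 2 := min_eq_left (by nlinarith)
        rw [hmin]
        linarith [hsb t ht hto]
      · push_neg at hto
        have h1 : η t ≤ η fstar := by
          have := hdec fstar t (by
            rw [abs_of_nonneg hf1.le, abs_of_nonneg (by linarith : (0:ℝ) ≤ t)]
            linarith)
          simp only [hηdef]
          exact this
        have h2 := hsb fstar hf1.le le_rfl
        have hmin : min (t ^ 2) (fstar ^ 2) = fstar ^ 2 := min_eq_right (by nlinarith)
        rw [hmin]
        linarith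
    intro t
    rcases le_total 0 t with h | h
    · exact hA0 t h
    · have := hA0 (-t) (by linarith)
      rwa [hηeven t, neg_sq] at this
  have hΦ1 : ∀ z t : ℝ,
      HasDerivAt (fun t => η (z + t) + η (z - t)) (d1 (z + t) - d1 (z - t)) t := by
    intro z t
    have h1 : HasDerivAt (fun t : ℝ => η (z + t)) (d1 (z + t)) t := by
      have := (hd1 (z + t)).comp t ((hasDerivAt_id t).const_add z)
      simpa [Function.comp_def] using this
    have h2 : HasDerivAt (fun t : ℝ => η (z - t)) (-d1 (z - t)) t := by
      have := (hd1 (z - t)).comp t ((hasDerivAt_id t).const_sub z)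
      simpa [Function.comp_def] using this
    simpa [sub_eq_add_neg, Pi.add_def] using h1.add h2
  have hΦ2 : ∀ z t : ℝ,
      HasDerivAt (fun t => d1 (z + t) - d1 (z - t)) (d2 (z + t) + d2 (z - t)) t := by
    intro z t
    have h1 : HasDerivAt (fun t : ℝ => d1 (z + t)) (d2 (z + t)) t := by
      have := (hd2 (z + t)).comp t ((hasDerivAt_id t).const_add z)
      simpa [Function.comp_def] using this
    have h2 : HasDerivAt (fun t : ℝ => d1 (z - t)) (-d2 (z - t)) t := by
      have := (hd2 (z - t)).comp t ((hasDerivAt_id t).const_sub z)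
      simpa [Function.comp_def] using this
    have := h1.sub h2
    simpa [sub_neg_eq_add, Pi.sub_def] using this
  have hBC : ∀ z aa K : ℝ, 0 ≤ aa → (∀ t ∈ Icc 0 aa, d2 (z + t) + d2 (z - t) ≤ K) →
      η (z - aa) + η (z + aa) ≤ 2 * η z + K * aa ^ 2 / 2 := by
    intro z aa K h0 hK
    have key := my_sec_bound (fun t => η (z + t) + η (z - t))
      (fun t => d1 (z + t) - d1 (z - t)) (fun t => d2 (z + t) + d2 (z - t))
      h0 (hΦ1 z) (hΦ2 z) (by simp) hK
    have key' : η (z + aa) + η (z - aa) ≤ (η (z + 0) + η (z - 0)) + K * aa ^ 2 / 2 := key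
    simp only [add_zero, sub_zero] at key'
    linarith
  have hB : ∀ z aa : ℝ, 0 ≤ aa → |z| + aa ≤ fstar →
      η (z - aa) + η (z + aa) ≤ 2 * η z - m * aa ^ 2 := by
    intro z aa h0 hf
    have hstep := hBC z aa (-(2*m)) h0 (fun t ht => by
      have hxt1 : |z + t| ≤ fstar := by
        calc |z + t| ≤ |z| + |t| := abs_add_le _ _
          _ ≤ |z| + aa := by
              rw [abs_of_nonneg ht.1]
              linarith [ht.2]
          _ ≤ fstar := hf
      have hxt2 : |z - t| ≤ fstar := by
        calc |z - t| ≤ |z| + |t| := abs_sub _ _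
          _ ≤ |z| + aa := by
              rw [abs_of_nonneg ht.1]
              linarith [ht.2]
          _ ≤ fstar := hf
      have g1 := hη2lt (z + t) (abs_le.mp hxt1)
      have g2 := hη2lt (z - t) (abs_le.mp hxt2)
      linarith)
    have e : -(2*m) * aa ^ 2 / 2 = -(m * aa ^ 2) := by ring
    linarith [hstep, e.le, e.ge]
  have hC' : ∀ z aa : ℝ, 0 ≤ aa →
      η (z - aa) + η (z + aa) ≤ 2 * η z + 2 * M2 * aa ^ 2 := by
    intro z aa h0
    have hstep := hBC z aa (4*M2) h0 (fun t _ => by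
      have g1 := abs_le.mp (hη2bdd (z + t))
      have g2 := abs_le.mp (hη2bdd (z - t))
      linarith)
    have e : 4 * M2 * aa ^ 2 / 2 = 2 * M2 * aa ^ 2 := by ring
    linarith [hstep, e.le, e.ge]
  have hlow : ∀ t : ℝ, η 0 - M2 * t ^ 2 ≤ η t := by
    have h0' : ∀ t, 0 ≤ t → η 0 - M2 * t ^ 2 ≤ η t := by
      intro t ht
      have key := my_sec_bound (fun u => -η u) (fun u => -d1 u) (fun u => -d2 u) ht
        (fun u => (hd1 u).neg) (fun u => (hd2 u).neg) (by simp [hη10]) (K := 2*M2)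
        (fun u _ => by
          show -d2 u ≤ 2 * M2
          have := abs_le.mp (hη2bdd u)
          linarith)
      have key' : -η t ≤ -η 0 + 2 * M2 * t ^ 2 / 2 := key
      nlinarith [key']
    intro t
    rcases le_total 0 t with h | h
    · exact h0' t h
    · have := h0' (-t) (by linarith)
      rwa [hηeven t, neg_sq] at this
  -- choice of sstar
  refine ⟨fstar * Real.sqrt (m / (16 * (m + 2 * M2 + 1))), by positivity, ?_⟩
  intro s hs hss r hr
  have hQ : 0 < 16 * (m + 2 * M2 + 1) := by linarith
  have hq : 0 < m / (16 * (m + 2 * M2 + 1)) := div_pos hm hQ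
  have hs2 : s ^ 2 * (16 * (m + 2 * M2 + 1)) < fstar ^ 2 * m := by
    have h1 : s ^ 2 < fstar ^ 2 * (m / (16 * (m + 2 * M2 + 1))) := by
      nlinarith [Real.sq_sqrt hq.le, Real.sqrt_nonneg (m / (16 * (m + 2 * M2 + 1))), hs, hss,
        mul_pos hf1 (Real.sqrt_pos.mpr hq)]
    calc s ^ 2 * (16 * (m + 2 * M2 + 1))
        < (fstar ^ 2 * (m / (16 * (m + 2 * M2 + 1)))) * (16 * (m + 2 * M2 + 1)) := by
          exact mul_lt_mul_of_pos_right h1 hQ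
      _ = fstar ^ 2 * m := by field_simp
  -- the weight
  have hs0 : s ≠ 0 := ne_of_gt hs
  set b : ℝ := 2 / s ^ 2 with hbdef
  have hb : 0 < b := by positivity
  set C : ℝ := (Real.sqrt (2 * Real.pi * (s ^ 2 / 4)))⁻¹ with hCdef
  have hC : C = (Real.sqrt (π / b))⁻¹ := by
    rw [hCdef]
    have : 2 * Real.pi * (s ^ 2 / 4) = π / b := by
      rw [hbdef]
      field_simp
      ring
    rw [this]
  set w : ℝ → ℝ := fun z => Real.exp (-b * z ^ 2) * C with hwdef
  clear_value C
  have hwrep : ∀ z : ℝ,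
      Real.exp (-(z ^ 2) / (2 * (s ^ 2 / 4))) / Real.sqrt (2 * Real.pi * (s ^ 2 / 4)) = w z := by
    intro z
    have h1 : -(z ^ 2) / (2 * (s ^ 2 / 4)) = -b * z ^ 2 := by
      rw [hbdef]
      field_simp
      ring
    rw [div_eq_mul_inv, h1, ← hCdef]
  have hw_int : Integrable w := by
    rw [hwdef]
    exact myW_int hb
  have hw_nonneg : ∀ z, 0 ≤ w z := by
    intro z
    simp only [hwdef, hCdef]
    positivity
  have hw_even : ∀ z, w (-z) = w z := by
    intro z
    simp only [hwdef, neg_sq]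
  have hw_tot : ∫ z, w z = 1 := by
    simp only [hwdef]
    exact myW_tot hb hC
  have hw_sq : ∫ z, z ^ 2 * w z = s ^ 2 / 4 := by
    simp only [hwdef]
    rw [myW_sq hb hC, hbdef]
    field_simp
    norm_num
  have hw_Iic : ∫ z in Iic (0:ℝ), w z = 1 / 2 := by
    simp only [hwdef]
    exact myW_half_Iic hb hC
  have hw_Ioi : ∫ z in Ioi (0:ℝ), w z = 1 / 2 := by
    simp only [hwdef]
    exact myW_half_Ioi hb hC
  have hw_sq_int : Integrable (fun z => z ^ 2 * w z) := by
    simp only [hwdef]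
    exact myW_sq_int hb
  clear_value w b
  have hbint : ∀ h : ℝ → ℝ, Continuous h → (∃ D, ∀ z, |h z| ≤ D) →
      Integrable (fun z => h z * w z) := by
    rintro h hc ⟨D, hD⟩
    exact hw_int.bdd_mul hc.aestronglyMeasurable (c := D) (Filter.Eventually.of_forall fun z => by
      simpa [Real.norm_eq_abs] using hD z)
  have hgcont : Continuous g := hsmooth.continuous
  have hηcont : Continuous η := by
    rw [hηdef]
    exact hgcont.add (hgcont.comp continuous_neg)
  set a : ℝ := r * s / 2 with hadef
  have ha : 0 < a := by rw [hadef]; positivity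
  clear_value a
  -- integrability of the various integrands
  have int1 : Integrable (fun z => η (z - a) * w z) :=
    hbint _ (hηcont.comp (continuous_id.sub continuous_const)) ⟨2*M, fun z => hηbdd _⟩
  have int2 : Integrable (fun z => η (z + a) * w z) :=
    hbint _ (hηcont.comp (continuous_id.add continuous_const)) ⟨2*M, fun z => hηbdd _⟩
  have int3 : Integrable (fun z => η z * w z) := hbint _ hηcont ⟨2*M, fun z => hηbdd _⟩
  have intg1 : Integrable (fun z => g (z - a) * w z) :=
    hbint _ (hgcont.comp (continuous_id.sub continuous_const)) ⟨M, fun z => hM _⟩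
  have intg2 : Integrable (fun z => g (a - z) * w z) :=
    hbint _ (hgcont.comp (continuous_const.sub continuous_id)) ⟨M, fun z => hM _⟩
  have intgz : Integrable (fun z => g z * w z) := hbint _ hgcont ⟨M, fun z => hM _⟩
  have intgnz : Integrable (fun z => g (-z) * w z) :=
    hbint _ (hgcont.comp continuous_neg) ⟨M, fun z => hM _⟩
  have intpair : Integrable (fun z => (η (z - a) + η (z + a)) * w z) := by
    have : (fun z => (η (z - a) + η (z + a)) * w z)
        = fun z => η (z - a) * w z + η (z + a) * w z := funext fun z => by ring
    rw [this]
    exact int1.add int2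
  -- identification of G with η-integrals
  have hGr : G s r = ∫ z, g (z - a) * w z := by
    rw [hG s r]
    have e : (fun z => g (z - r * s / 2) *
        (Real.exp (-(z ^ 2) / (2 * (s ^ 2 / 4))) / Real.sqrt (2 * Real.pi * (s ^ 2 / 4))))
        = fun z => g (z - a) * w z := funext fun z => by rw [hwrep z, hadef]
    rw [e]
  have hGmr : G s (-r) = ∫ z, g (a - z) * w z := by
    rw [hG s (-r)]
    have e : (fun z => g (z - -r * s / 2) *
        (Real.exp (-(z ^ 2) / (2 * (s ^ 2 / 4))) / Real.sqrt (2 * Real.pi * (s ^ 2 / 4))))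
        = fun z => g (z + a) * w z := funext fun z => by
      rw [hwrep z, show z - -r * s / 2 = z + a by rw [hadef]; ring]
    rw [e, ← my_integral_comp_neg (fun z => g (z + a) * w z)]
    have e2 : (fun z : ℝ => g (-z + a) * w (-z)) = fun z => g (a - z) * w z :=
      funext fun z => by rw [hw_even z, show -z + a = a - z by ring]
    show ∫ z : ℝ, g (-z + a) * w (-z) = _
    rw [e2]
  have E3 : G s r + G s (-r) = ∫ z, η (z - a) * w z := by
    rw [hGr, hGmr, ← integral_add intg1 intg2]
    have e : (fun z => g (z - a) * w z + g (a - z) * w z) = fun z => η (z - a) * w z :=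
      funext fun z => by
        simp only [hηdef]
        rw [show -(z - a) = a - z by ring]
        ring
    rw [e]
  have E4 : ∫ z, η (z - a) * w z = ∫ z, η (z + a) * w z := by
    rw [← my_integral_comp_neg (fun z => η (z + a) * w z)]
    have e : (fun z : ℝ => η (-z + a) * w (-z)) = fun z => η (z - a) * w z :=
      funext fun z => by
        rw [hw_even z, show -z + a = -(z - a) by ring, hηeven (z - a)]
    show _ = ∫ z : ℝ, η (-z + a) * w (-z)
    rw [e]
  have hG0 : G s 0 = ∫ z, g z * w z := by
    rw [hG s 0]
    have e : (fun z => g (z - 0 * s / 2) *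
        (Real.exp (-(z ^ 2) / (2 * (s ^ 2 / 4))) / Real.sqrt (2 * Real.pi * (s ^ 2 / 4))))
        = fun z => g z * w z := funext fun z => by
      rw [hwrep z, show z - 0 * s / 2 = z by ring]
    rw [e]
  have E5 : 2 * G s 0 = ∫ z, η z * w z := by
    have h2 : ∫ z, g (-z) * w z = ∫ z, g z * w z := by
      have h' : (fun z : ℝ => g (-z) * w (-z)) = fun z => g (-z) * w z :=
        funext fun z => by rw [hw_even]
      rw [← h']
      exact my_integral_comp_neg (fun z => g z * w z)
    have e : (fun z => η z * w z) = fun z => g z * w z + g (-z) * w z :=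
      funext fun z => by
        simp only [hηdef]
        ring
    rw [hG0, e, integral_add intgz intgnz, h2]
    ring
  -- main estimate
  have key : ∫ z, η (z - a) * w z < ∫ z, η z * w z := by
    by_cases hcase : a ≤ fstar / 2
    · -- small separation: use strict concavity on the bulk
      set S : Set ℝ := Icc (-(fstar/2)) (fstar/2) with hSdef
      clear_value S
      have hSmeas : MeasurableSet S := by rw [hSdef]; exact measurableSet_Icc
      have hRin : Integrable (fun z => 2 * (η z * w z) - (m * a ^ 2) * w z) :=
        (int3.const_mul 2).sub (hw_int.const_mul (m * a ^ 2))
      have hRout : Integrable (fun z => 2 * (η z * w z) + (2 * M2 * a ^ 2) * w z) :=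
        (int3.const_mul 2).add (hw_int.const_mul (2 * M2 * a ^ 2))
      have hin : ∫ z in S, (η (z - a) + η (z + a)) * w z
          ≤ 2 * (∫ z in S, η z * w z) - m * a ^ 2 * (∫ z in S, w z) := by
        have step : ∫ z in S, (η (z - a) + η (z + a)) * w z
            ≤ ∫ z in S, (2 * (η z * w z) - (m * a ^ 2) * w z) := by
          apply setIntegral_mono_on intpair.integrableOn hRin.integrableOn hSmeas
          intro z hz
          rw [hSdef, mem_Icc] at hz
          have hzb : |z| ≤ fstar / 2 := abs_le.mpr ⟨by linarith [hz.1], hz.2⟩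
          have h1 := hB z a ha.le (by linarith)
          have h2 := mul_le_mul_of_nonneg_right h1 (hw_nonneg z)
          calc (η (z - a) + η (z + a)) * w z ≤ (2 * η z - m * a ^ 2) * w z := h2
            _ = 2 * (η z * w z) - (m * a ^ 2) * w z := by ring
        rw [integral_sub ((int3.const_mul 2).integrableOn)
          ((hw_int.const_mul (m * a ^ 2)).integrableOn),
          MeasureTheory.integral_const_mul, MeasureTheory.integral_const_mul] at step
        linarith
      have hout : ∫ z in Sᶜ, (η (z - a) + η (z + a)) * w z
          ≤ 2 * (∫ z in Sᶜ, η z * w z) + 2 * M2 * a ^ 2 * (∫ z in Sᶜ, w z) := by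
        have step : ∫ z in Sᶜ, (η (z - a) + η (z + a)) * w z
            ≤ ∫ z in Sᶜ, (2 * (η z * w z) + (2 * M2 * a ^ 2) * w z) := by
          apply setIntegral_mono_on intpair.integrableOn hRout.integrableOn hSmeas.compl
          intro z _
          have h1 := hC' z a ha.le
          have h2 := mul_le_mul_of_nonneg_right h1 (hw_nonneg z)
          calc (η (z - a) + η (z + a)) * w z ≤ (2 * η z + 2 * M2 * a ^ 2) * w z := h2
            _ = 2 * (η z * w z) + (2 * M2 * a ^ 2) * w z := by ring
        rw [integral_add ((int3.const_mul 2).integrableOn)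
          ((hw_int.const_mul (2 * M2 * a ^ 2)).integrableOn),
          MeasureTheory.integral_const_mul, MeasureTheory.integral_const_mul] at step
        linarith
      have hPsum : (∫ z in S, w z) + (∫ z in Sᶜ, w z) = 1 := by
        rw [integral_add_compl hSmeas hw_int, hw_tot]
      have hEsum : (∫ z in S, η z * w z) + (∫ z in Sᶜ, η z * w z) = ∫ z, η z * w z :=
        integral_add_compl hSmeas int3
      have hpairsplit : ∫ z, (η (z - a) + η (z + a)) * w z
          = (∫ z in S, (η (z - a) + η (z + a)) * w z)
            + ∫ z in Sᶜ, (η (z - a) + η (z + a)) * w z :=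
        (integral_add_compl hSmeas intpair).symm
      have hPout_nn : 0 ≤ ∫ z in Sᶜ, w z :=
        setIntegral_nonneg hSmeas.compl (fun z _ => hw_nonneg z)
      have hPout_le : ∫ z in Sᶜ, w z ≤ s ^ 2 / fstar ^ 2 := by
        have step1 : ∫ z in Sᶜ, w z ≤ ∫ z in Sᶜ, (z ^ 2 * w z) / (fstar/2) ^ 2 := by
          apply setIntegral_mono_on hw_int.integrableOn
            ((hw_sq_int.div_const _).integrableOn) hSmeas.compl
          intro z hz
          have hz' : fstar / 2 < |z| := by
            simp only [hSdef, mem_compl_iff, mem_Icc, not_and_or, not_le] at hz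
            rcases hz with h | h
            · calc fstar / 2 < -z := by linarith
                _ ≤ |z| := neg_le_abs z
            · calc fstar / 2 < z := h
                _ ≤ |z| := le_abs_self z
          have hz2 : (fstar/2) ^ 2 < z ^ 2 := by
            nlinarith [abs_nonneg z, sq_abs z, hf1]
          have hw0 := hw_nonneg z
          rw [le_div_iff₀ (by positivity)]
          nlinarith
        have step2 : ∫ z in Sᶜ, (z ^ 2 * w z) / (fstar/2) ^ 2
            ≤ ∫ z, (z ^ 2 * w z) / (fstar/2) ^ 2 :=
          setIntegral_le_integral (hw_sq_int.div_const _)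
            (Filter.Eventually.of_forall fun z => by
              have := hw_nonneg z
              positivity)
        have step3 : ∫ z, (z ^ 2 * w z) / (fstar/2) ^ 2 = s ^ 2 / fstar ^ 2 := by
          rw [integral_div, hw_sq]
          field_simp
          ring
        linarith
      have hP2 : (m + 2 * M2) * (∫ z in Sᶜ, w z) < m := by
        have hfs : 0 < fstar ^ 2 := by positivity
        have h1 : (m + 2 * M2) * (∫ z in Sᶜ, w z) ≤ (m + 2 * M2) * (s ^ 2 / fstar ^ 2) :=
          mul_le_mul_of_nonneg_left hPout_le (by linarith)
        have h2 : (m + 2 * M2) * (s ^ 2 / fstar ^ 2) < m := by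
          rw [← mul_div_assoc, div_lt_iff₀ hfs]
          nlinarith [hs2, sq_nonneg s]
        linarith
      have hA2 : 0 < a ^ 2 := by positivity
      have pairle : ∫ z, (η (z - a) + η (z + a)) * w z < 2 * ∫ z, η z * w z := by
        have hneg : a ^ 2 * ((m + 2 * M2) * (∫ z in Sᶜ, w z) - m) < 0 :=
          mul_neg_of_pos_of_neg hA2 (by linarith [hP2])
        have hmid : (2 * (∫ z in S, η z * w z) - m * a ^ 2 * (∫ z in S, w z))
            + (2 * (∫ z in Sᶜ, η z * w z) + 2 * M2 * a ^ 2 * (∫ z in Sᶜ, w z))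
            = 2 * ((∫ z in S, η z * w z) + (∫ z in Sᶜ, η z * w z))
              + a ^ 2 * ((m + 2 * M2) * (∫ z in Sᶜ, w z) - m)
              + m * a ^ 2 * (1 - ((∫ z in S, w z) + (∫ z in Sᶜ, w z))) := by ring
        rw [hPsum] at hmid
        rw [hEsum] at hmid
        calc ∫ z, (η (z - a) + η (z + a)) * w z
            = (∫ z in S, (η (z - a) + η (z + a)) * w z)
              + ∫ z in Sᶜ, (η (z - a) + η (z + a)) * w z := hpairsplit
          _ ≤ (2 * (∫ z in S, η z * w z) - m * a ^ 2 * (∫ z in S, w z))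
              + (2 * (∫ z in Sᶜ, η z * w z) + 2 * M2 * a ^ 2 * (∫ z in Sᶜ, w z)) :=
            add_le_add hin hout
          _ = 2 * (∫ z, η z * w z) + a ^ 2 * ((m + 2 * M2) * (∫ z in Sᶜ, w z) - m) := by
            rw [hmid]; ring
          _ < 2 * ∫ z, η z * w z := by linarith [hneg]
      have EP : (∫ z, η (z - a) * w z) + (∫ z, η (z + a) * w z)
          = ∫ z, (η (z - a) + η (z + a)) * w z := by
        rw [← integral_add int1 int2]
        congr 1
        funext z
        ring
      rw [E4] at EP ⊢
      linarith [EP, pairle, E4]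
    · -- large separation
      push_neg at hcase
      have in1 : ∫ z in Iic (0:ℝ), η (z - a) * w z ≤ (η 0 - m * fstar ^ 2 / 8) * (1/2) := by
        have step : ∫ z in Iic (0:ℝ), η (z - a) * w z
            ≤ ∫ z in Iic (0:ℝ), (η 0 - m * fstar ^ 2 / 8) * w z := by
          apply setIntegral_mono_on int1.integrableOn
            ((hw_int.const_mul _).integrableOn) measurableSet_Iic
          intro z hz
          have hz0 : z ≤ 0 := hz
          have hA' := hA (z - a)
          have h1 : a ^ 2 ≤ (z - a) ^ 2 := by nlinarith [mul_nonneg (neg_nonneg.mpr hz0) ha.le]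
          have h2 : fstar ^ 2 / 4 ≤ min ((z - a) ^ 2) (fstar ^ 2) :=
            le_min (by nlinarith) (by nlinarith)
          have h3 : η (z - a) ≤ η 0 - m * fstar ^ 2 / 8 := by nlinarith
          exact mul_le_mul_of_nonneg_right h3 (hw_nonneg z)
        rw [MeasureTheory.integral_const_mul, hw_Iic] at step
        linarith
      have in2 : ∫ z in Ioi (0:ℝ), η (z - a) * w z ≤ η 0 * (1/2) := by
        have step : ∫ z in Ioi (0:ℝ), η (z - a) * w z ≤ ∫ z in Ioi (0:ℝ), η 0 * w z := by
          apply setIntegral_mono_on int1.integrableOn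
            ((hw_int.const_mul _).integrableOn) measurableSet_Ioi
          intro z _
          have hA' := hA (z - a)
          have h2 : (0:ℝ) ≤ min ((z - a) ^ 2) (fstar ^ 2) :=
            le_min (sq_nonneg _) (sq_nonneg _)
          have h3 : η (z - a) ≤ η 0 := by nlinarith
          exact mul_le_mul_of_nonneg_right h3 (hw_nonneg z)
        rw [MeasureTheory.integral_const_mul, hw_Ioi] at step
        linarith
      have tot1 : ∫ z, η (z - a) * w z ≤ η 0 - m * fstar ^ 2 / 16 := by
        have hsplit := intervalIntegral.integral_Iic_add_Ioi (b := (0:ℝ))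
          int1.integrableOn int1.integrableOn
        linarith [in1, in2, hsplit]
      have low : η 0 - M2 * (s ^ 2 / 4) ≤ ∫ z, η z * w z := by
        have e : (fun z => (η 0 - M2 * z ^ 2) * w z)
            = fun z => η 0 * w z - M2 * (z ^ 2 * w z) := funext fun z => by ring
        have hintlow : Integrable (fun z => (η 0 - M2 * z ^ 2) * w z) := by
          rw [e]
          exact (hw_int.const_mul (η 0)).sub (hw_sq_int.const_mul M2)
        have step : ∫ z, (η 0 - M2 * z ^ 2) * w z ≤ ∫ z, η z * w z := by
          apply integral_mono hintlow int3
          intro z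
          exact mul_le_mul_of_nonneg_right (hlow z) (hw_nonneg z)
        have calc1 : ∫ z, (η 0 - M2 * z ^ 2) * w z = η 0 - M2 * (s ^ 2 / 4) := by
          rw [e, integral_sub (hw_int.const_mul (η 0)) (hw_sq_int.const_mul M2),
            MeasureTheory.integral_const_mul, MeasureTheory.integral_const_mul, hw_tot, hw_sq]
          ring
        linarith
      have hgap : M2 * (s ^ 2 / 4) < m * fstar ^ 2 / 16 := by
        have hss0 : 0 < s ^ 2 := by positivity
        nlinarith [hs2, hss0, hM2nn, hm]
      linarith [tot1, low, hgap]
  linarith [E3, E5, key]
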